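/- For any partition ν contained in Box_{k,n} with at most k parts and any row index i ≤ k, one can add a rim hook of size n to ν whose Southwestern-most box lies weakly below row i, producing a partition μ with μ_1 > n−k; in particular, every rim hook of size n−r removed from a partition λ ⊆ Box_{k,n} extends (rightward) to a rim hook of size n. -/

import Mathlib

open MvPolynomial


theorem sorted_replicate_ge (m c : ℕ) : (List.replicate m c).SortedGE := by
  rw [List.sortedGE_iff_pairwise]
  induction m with
  | zero => simp
  | succ n ih =>
    rw [List.replicate_succ, List.pairwise_cons]
    exact ⟨fun b hb => (List.eq_of_mem_replicate hb).le, ih⟩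

/-- `h_m` with integer index: zero for negative `m`. -/
noncomputable def hpoly (N : ℕ) (m : ℤ) : MvPolynomial (Fin N) ℚ :=
  if 0 ≤ m then hsymm (Fin N) ℚ m.toNat else 0

/-- The Schur polynomial in `N` variables of a partition (Young diagram), via
the Jacobi–Trudi determinant `det (h_{λ_i + j - i})`. -/
noncomputable def schur (N : ℕ) (μ : YoungDiagram) : MvPolynomial (Fin N) ℚ :=
  Matrix.det (Matrix.of fun i j : Fin μ.rowLens.length =>
    hpoly N ((μ.rowLens.get i : ℤ) + (j : ℤ) - (i : ℤ)))

/-- The hook partition `(b, 1^(a-1))` (with `a` rows; intended for `a, b ≥ 1`). -/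
def hookDiagram (a b : ℕ) : YoungDiagram :=
  YoungDiagram.ofRowLens (max b 1 :: List.replicate (a - 1) 1) (by
    rw [List.sortedGE_iff_pairwise]
    simp only [List.pairwise_cons]
    refine ⟨fun x hx => ?_, List.sortedGE_iff_pairwise.mp (sorted_replicate_ge ..)⟩
    rw [List.eq_of_mem_replicate hx]
    omega)

/-- The cells of the skew shape `μ / λ`. -/
def skewCells (lam mu : YoungDiagram) : Finset (ℕ × ℕ) := mu.cells \ lam.cells

/-- Two boxes are (edgewise) adjacent. -/
def Adj (c d : ℕ × ℕ) : Prop :=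
  (c.1 = d.1 ∧ (c.2 = d.2 + 1 ∨ d.2 = c.2 + 1)) ∨
  (c.2 = d.2 ∧ (c.1 = d.1 + 1 ∨ d.1 = c.1 + 1))

/-- A set of boxes is edgewise connected. -/
def IsConnectedCells (s : Finset (ℕ × ℕ)) : Prop :=
  ∀ c ∈ s, ∀ d ∈ s, Relation.ReflTransGen (fun x y => x ∈ s ∧ y ∈ s ∧ Adj x y) c d

/-- A set of boxes contains no 2×2 square. -/
def NoSquare (s : Finset (ℕ × ℕ)) : Prop :=
  ¬∃ i j : ℕ, (i, j) ∈ s ∧ (i + 1, j) ∈ s ∧ (i, j + 1) ∈ s ∧ (i + 1, j + 1) ∈ s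

/-- `μ / λ` is a rim hook (border strip): nonempty, connected, no 2×2 square. -/
def IsRimHook (lam mu : YoungDiagram) : Prop :=
  lam ≤ mu ∧ (skewCells lam mu).Nonempty ∧ IsConnectedCells (skewCells lam mu) ∧
    NoSquare (skewCells lam mu)

/-- The number of boxes of the skew shape `μ / λ`. -/
def skewSize (lam mu : YoungDiagram) : ℕ := (skewCells lam mu).card

/-- The height (number of nonempty rows) of the skew shape `μ / λ`. -/
def skewHt (lam mu : YoungDiagram) : ℕ := ((skewCells lam mu).image Prod.fst).card

/-- The `k × (n-k)` rectangle partition `Box_{k,n}`. -/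
def box (k n : ℕ) : YoungDiagram :=
  YoungDiagram.ofRowLens (List.replicate k (n - k)) (sorted_replicate_ge ..)

/-- The diagonal `j - i` of a box `(i, j)`. -/
def diagOf (c : ℕ × ℕ) : ℤ := (c.2 : ℤ) - (c.1 : ℤ)

section RimAux

lemma mem_box_iff {k n : ℕ} (c : ℕ × ℕ) : c ∈ box k n ↔ c.1 < k ∧ c.2 < n - k := by
  rw [box, YoungDiagram.mem_ofRowLens]
  constructor
  · rintro ⟨h, h2⟩
    simp only [List.length_replicate] at h
    simp only [List.getElem_replicate] at h2
    exact ⟨h, h2⟩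
  · rintro ⟨h, h2⟩
    exact ⟨by simpa using h, by simpa using h2⟩

lemma nat_eq_of_lt_iff {a b : ℕ} (h : ∀ j, j < a ↔ j < b) : a = b := by
  rcases lt_trichotomy a b with h' | h' | h'
  · exact absurd ((h a).mpr h') (lt_irrefl a)
  · exact h'
  · exact absurd ((h b).mp h') (lt_irrefl b)

/-- Row lengths of the diagram obtained by adding to `nu` a rim hook of size `n`
spanning rows `0..t`. -/
def murow (nu : YoungDiagram) (n t a : ℕ) : ℕ :=
  if a = 0 then nu.rowLen t + (n - t)
  else if a ≤ t then nu.rowLen (a - 1) + 1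
  else nu.rowLen a

lemma rowLen_le_of_le_box {k n : ℕ} {nu : YoungDiagram} (hnu : nu ≤ box k n) (a : ℕ) :
    nu.rowLen a ≤ n - k := by
  by_contra h
  push_neg at h
  have : (a, n - k) ∈ nu := YoungDiagram.mem_iff_lt_rowLen.mpr h
  have := (mem_box_iff (a, n - k)).mp (hnu this)
  omega

/-- Telescoping sum for consecutive row lengths. -/
lemma tel_sum (nu : YoungDiagram) : ∀ m : ℕ,
    (∑ a ∈ Finset.range m, (nu.rowLen a + 1 - nu.rowLen (a + 1))) + nu.rowLen m
      = m + nu.rowLen 0 := by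
  intro m
  induction m with
  | zero => simp
  | succ m ih =>
    rw [Finset.sum_range_succ]
    have h1 : nu.rowLen (m + 1) ≤ nu.rowLen m := nu.rowLen_anti m (m + 1) (by omega)
    omega

/-- If no 2×2 square in the skew shape, each row is at most one longer than the
previous row of the inner shape. -/
lemma row_bound_of_noSquare {nu lam : YoungDiagram} (h : nu ≤ lam)
    (hs : NoSquare (skewCells nu lam)) (a : ℕ) :
    lam.rowLen (a + 1) ≤ nu.rowLen a + 1 := by
  by_contra hc
  push_neg at hc
  set j := nu.rowLen a with hj
  apply hs
  refine ⟨a, j, ?_, ?_, ?_, ?_⟩ <;>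
  · rw [skewCells, Finset.mem_sdiff, YoungDiagram.mem_cells, YoungDiagram.mem_cells,
      YoungDiagram.mem_iff_lt_rowLen, YoungDiagram.mem_iff_lt_rowLen]
    constructor
    · first
      | omega
      | (have h2 : lam.rowLen (a + 1) ≤ lam.rowLen a := lam.rowLen_anti a (a + 1) (by omega)
         omega)
    · have h3 : nu.rowLen (a + 1) ≤ nu.rowLen a := nu.rowLen_anti a (a + 1) (by omega)
      omega

end RimAux

section Main

lemma rim_construction {k n : ℕ} (hkn : k < n) (nu : YoungDiagram) (hnu : nu ≤ box k n)
    (t : ℕ) (ht : t < k) :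
    ∃ mu : YoungDiagram, (∀ a b : ℕ, (a, b) ∈ mu ↔ a < k ∧ b < murow nu n t a) ∧
      IsRimHook nu mu ∧ skewSize nu mu = n ∧ (t, nu.rowLen t) ∈ skewCells nu mu ∧
      n - k < mu.rowLen 0 := by
  have hbox : ∀ a, nu.rowLen a ≤ n - k := rowLen_le_of_le_box hnu
  have hanti : ∀ a b : ℕ, a ≤ b → nu.rowLen b ≤ nu.rowLen a := fun a b h => nu.rowLen_anti a b h
  have hm0 : murow nu n t 0 = nu.rowLen t + (n - t) := by simp [murow]
  have hma : ∀ a, 1 ≤ a → a ≤ t → murow nu n t a = nu.rowLen (a - 1) + 1 := by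
    intro a h1 h2; unfold murow; rw [if_neg (by omega), if_pos h2]
  have hmh : ∀ a, t < a → murow nu n t a = nu.rowLen a := by
    intro a h; unfold murow; rw [if_neg (by omega), if_neg (by omega)]
  have hge : ∀ a, nu.rowLen a ≤ murow nu n t a := by
    intro a
    rcases Nat.eq_zero_or_pos a with rfl | ha
    · rw [hm0]; have := hbox 0; have := hanti 0 t (by omega); omega
    rcases le_or_gt a t with h | h
    · rw [hma a ha h]; have := hanti (a - 1) a (by omega); omega
    · rw [hmh a h]
  have hgt : ∀ a, a ≤ t → nu.rowLen a < murow nu n t a := by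
    intro a hat
    rcases Nat.eq_zero_or_pos a with rfl | ha
    · rw [hm0]; have := hbox 0; have := hanti 0 t (by omega); omega
    · rw [hma a ha hat]; have := hanti (a - 1) a (by omega); omega
  have hstep : ∀ a, murow nu n t (a + 1) ≤ murow nu n t a := by
    intro a
    rcases Nat.eq_zero_or_pos a with rfl | ha
    · rw [hm0]
      rcases le_or_gt 1 t with h | h
      · rw [hma 1 le_rfl h]; simp only [Nat.sub_self]; have := hbox 0; omega
      · have ht0 : t = 0 := by omega
        rw [hmh 1 (by omega), ht0]; have := hanti 0 1 (by omega); omega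
    rcases le_or_gt (a + 1) t with h | h
    · rw [hma (a + 1) (by omega) h, hma a ha (by omega)]
      simp only [Nat.add_sub_cancel]
      have := hanti (a - 1) a (by omega); omega
    rcases le_or_gt a t with h2 | h2
    · have hat : a = t := by omega
      rw [hmh (a + 1) h, hma a ha h2, hat]
      have := hanti (t - 1) (t + 1) (by omega); omega
    · rw [hmh (a + 1) h, hmh a h2]; exact hanti a (a + 1) (by omega)
  have hantim : Antitone (murow nu n t) := antitone_nat_of_succ_le hstep
  have hsorted : (List.ofFn fun i : Fin k => murow nu n t i).SortedGE :=
    List.sortedGE_iff_pairwise.mpr (List.pairwise_ofFn.mpr (fun i j hij => hantim (le_of_lt hij)))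
  refine ⟨YoungDiagram.ofRowLens _ hsorted, ?_⟩
  set mu := YoungDiagram.ofRowLens _ hsorted with hmu
  have hmem : ∀ a b : ℕ, (a, b) ∈ mu ↔ a < k ∧ b < murow nu n t a := by
    intro a b
    rw [hmu, YoungDiagram.mem_ofRowLens]
    constructor
    · rintro ⟨h, h2⟩
      simp only [List.length_ofFn] at h
      simp only [List.getElem_ofFn] at h2
      exact ⟨h, h2⟩
    · rintro ⟨h, h2⟩
      refine ⟨by simpa using h, ?_⟩
      simpa using h2
  have hle : nu ≤ mu := by
    intro c hc
    obtain ⟨a, b⟩ := c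
    have hbox := (mem_box_iff (a, b)).mp (hnu hc)
    rw [YoungDiagram.mem_iff_lt_rowLen] at hc
    exact (hmem a b).mpr ⟨hbox.1, lt_of_lt_of_le hc (hge a)⟩
  have hskew : ∀ a b : ℕ, (a, b) ∈ skewCells nu mu ↔ a ≤ t ∧ nu.rowLen a ≤ b ∧ b < murow nu n t a := by
    intro a b
    rw [skewCells, Finset.mem_sdiff, YoungDiagram.mem_cells, YoungDiagram.mem_cells,
      hmem, YoungDiagram.mem_iff_lt_rowLen]
    constructor
    · rintro ⟨⟨hak, hb⟩, hnb⟩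
      push_neg at hnb
      refine ⟨?_, hnb, hb⟩
      by_contra hat
      push_neg at hat
      rw [hmh a hat] at hb
      omega
    · rintro ⟨hat, h1, h2⟩
      exact ⟨⟨by omega, h2⟩, by omega⟩
  have hrowmem : ∀ a, a ≤ t → (a, nu.rowLen a) ∈ skewCells nu mu := by
    intro a hat
    exact (hskew a (nu.rowLen a)).mpr ⟨hat, le_rfl, hgt a hat⟩
  -- The relation
  set s := skewCells nu mu with hs
  set R : ℕ × ℕ → ℕ × ℕ → Prop := fun x y => x ∈ s ∧ y ∈ s ∧ Adj x y with hR
  have hsymR : Symmetric R := by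
    rintro ⟨c1, c2⟩ ⟨d1, d2⟩ ⟨h1, h2, h3⟩
    refine ⟨h2, h1, ?_⟩
    unfold Adj at h3 ⊢
    simp only at h3 ⊢
    omega
  have horiz : ∀ a b b' : ℕ, (a, b) ∈ s → b ≤ b' → b' < murow nu n t a →
      Relation.ReflTransGen R (a, b) (a, b') := by
    intro a b b' hb hbb'
    induction b' , hbb' using Nat.le_induction with
    | base => intro _; exact Relation.ReflTransGen.refl
    | succ b' hbb' ih =>
      intro hlt
      have hin := (hskew a b).mp hb
      have hmid : (a, b') ∈ s := (hskew a b').mpr ⟨hin.1, by omega, by omega⟩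
      have hnext : (a, b' + 1) ∈ s := (hskew a (b' + 1)).mpr ⟨hin.1, by omega, hlt⟩
      exact (ih (by omega)).tail ⟨hmid, hnext, Or.inl ⟨rfl, Or.inr rfl⟩⟩
  have anchor : ∀ d a : ℕ, a + d = t → Relation.ReflTransGen R (a, nu.rowLen a) (t, nu.rowLen t) := by
    intro d
    induction d with
    | zero => intro a h; rw [show a = t by omega]
    | succ d ih =>
      intro a h
      have hat : a + 1 ≤ t := by omega
      have h1 : (a, nu.rowLen a) ∈ s := hrowmem a (by omega)
      have h2 : (a + 1, nu.rowLen a) ∈ s := by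
        refine (hskew (a + 1) (nu.rowLen a)).mpr ⟨hat, hanti a (a + 1) (by omega), ?_⟩
        rw [hma (a + 1) (by omega) hat]
        simp only [Nat.add_sub_cancel]
        omega
      have step1 : Relation.ReflTransGen R (a, nu.rowLen a) (a + 1, nu.rowLen a) :=
        Relation.ReflTransGen.single ⟨h1, h2, Or.inr ⟨rfl, Or.inr rfl⟩⟩
      have h3 : (a + 1, nu.rowLen (a + 1)) ∈ s := hrowmem (a + 1) hat
      have step2 : Relation.ReflTransGen R (a + 1, nu.rowLen a) (a + 1, nu.rowLen (a + 1)) := by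
        have := horiz (a + 1) (nu.rowLen (a + 1)) (nu.rowLen a) h3 (hanti a (a + 1) (by omega))
          (((hskew (a + 1) (nu.rowLen a)).mp h2).2.2)
        exact (fun h => by haveI : Std.Symm R := ⟨fun _ _ h => hsymR h⟩; exact Std.Symm.symm _ _ h) this
      exact (step1.trans step2).trans (ih (a + 1) (by omega))
  have hconn : IsConnectedCells s := by
    intro c hc d hd
    obtain ⟨a, b⟩ := c
    obtain ⟨a', b'⟩ := d
    have hca := (hskew a b).mp hc
    have hda := (hskew a' b').mp hd
    have p1 : Relation.ReflTransGen R (a, b) (t, nu.rowLen t) := by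
      have hl : (a, nu.rowLen a) ∈ s := hrowmem a hca.1
      have := horiz a (nu.rowLen a) b hl hca.2.1 hca.2.2
      exact (@Std.Symm.symm _ (Relation.ReflTransGen R) (by haveI : Std.Symm R := ⟨fun _ _ h => hsymR h⟩; infer_instance) _ _ this).trans
        (anchor (t - a) a (by omega))
    have p2 : Relation.ReflTransGen R (a', b') (t, nu.rowLen t) := by
      have hl : (a', nu.rowLen a') ∈ s := hrowmem a' hda.1
      have := horiz a' (nu.rowLen a') b' hl hda.2.1 hda.2.2
      exact (@Std.Symm.symm _ (Relation.ReflTransGen R) (by haveI : Std.Symm R := ⟨fun _ _ h => hsymR h⟩; infer_instance) _ _ this).trans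
        (anchor (t - a') a' (by omega))
    exact p1.trans ((fun h => by haveI : Std.Symm R := ⟨fun _ _ h => hsymR h⟩; exact Std.Symm.symm _ _ h) p2)
  have hnosq : NoSquare s := by
    rintro ⟨i, j, h1, h2, h3, h4⟩
    have g1 := (hskew i j).mp h1
    have g2 := (hskew (i + 1) j).mp h2
    have g4 := (hskew (i + 1) (j + 1)).mp h4
    rw [hma (i + 1) (by omega) g2.1] at g4
    simp only [Nat.add_sub_cancel] at g4
    omega
  -- size computation
  have hsize : skewSize nu mu = n := by
    have hsplit : s = Finset.biUnion (Finset.range (t + 1))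
        (fun a => (Finset.Ico (nu.rowLen a) (murow nu n t a)).image (fun j => (a, j))) := by
      ext ⟨x, y⟩
      simp only [Finset.mem_biUnion, Finset.mem_range, Finset.mem_image, Finset.mem_Ico,
        Prod.mk.injEq]
      rw [hs, hskew]
      constructor
      · rintro ⟨h1, h2, h3⟩
        exact ⟨x, by omega, y, ⟨h2, h3⟩, rfl, rfl⟩
      · rintro ⟨a, ha, j, ⟨hj1, hj2⟩, rfl, rfl⟩
        exact ⟨by omega, hj1, hj2⟩
    have hdisj : ∀ a ∈ Finset.range (t + 1), ∀ b ∈ Finset.range (t + 1), a ≠ b →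
        Disjoint ((Finset.Ico (nu.rowLen a) (murow nu n t a)).image (fun j => (a, j)))
          ((Finset.Ico (nu.rowLen b) (murow nu n t b)).image (fun j => (b, j))) := by
      intro a _ b _ hab
      rw [Finset.disjoint_left]
      rintro ⟨x, y⟩ hx hy
      simp only [Finset.mem_image, Prod.mk.injEq] at hx hy
      obtain ⟨_, _, rfl, _⟩ := hx
      obtain ⟨_, _, h, _⟩ := hy
      exact hab h.symm
    rw [skewSize, ← hs, hsplit, Finset.card_biUnion hdisj]
    have hcard : ∀ a, ((Finset.Ico (nu.rowLen a) (murow nu n t a)).image (fun j => (a, j))).card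
        = murow nu n t a - nu.rowLen a := by
      intro a
      rw [Finset.card_image_of_injective _ (fun x y h => (Prod.mk.injEq _ _ _ _).mp h |>.2),
        Nat.card_Ico]
    simp only [hcard]
    rw [Finset.sum_range_succ']
    have hcongr : ∀ a ∈ Finset.range t,
        murow nu n t (a + 1) - nu.rowLen (a + 1) = nu.rowLen a + 1 - nu.rowLen (a + 1) := by
      intro a ha
      rw [Finset.mem_range] at ha
      rw [hma (a + 1) (by omega) (by omega)]
      simp
    rw [Finset.sum_congr rfl hcongr, hm0]
    have htel := tel_sum nu t
    have h0 := hbox 0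
    have hta := hanti 0 t (by omega)
    omega
  have hrow0 : mu.rowLen 0 = murow nu n t 0 := by
    apply nat_eq_of_lt_iff
    intro j
    rw [← YoungDiagram.mem_iff_lt_rowLen, hmem]
    constructor
    · rintro ⟨_, h⟩; exact h
    · intro h; exact ⟨by omega, h⟩
  refine ⟨hmem, ⟨hle, ⟨(t, nu.rowLen t), hrowmem t le_rfl⟩, hconn, hnosq⟩, hsize,
    hrowmem t le_rfl, ?_⟩
  rw [hrow0, hm0]
  omega

end Main

/-- to any `ν ⊆ Box_{k,n}` one can add a rim hook of size `n` whose
Southwestern-most box lies weakly below any given row `i ≤ k`, producing `μ` with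
`μ₁ > n - k`; in particular every rim hook of size `n-r` removed from `λ ⊆ Box_{k,n}`
extends rightward to a rim hook of size `n`. -/
theorem add_n_rim_hook (k n r : ℕ) (hk : 0 < k) (hkn : k < n) (hr : 0 < r) (hrn : r < n) :
    (∀ nu : YoungDiagram, nu ≤ box k n → ∀ i : ℕ, i < k →
      ∃ mu : YoungDiagram, IsRimHook nu mu ∧ skewSize nu mu = n ∧
        (∃ c ∈ skewCells nu mu, i ≤ c.1) ∧ n - k < mu.rowLen 0) ∧
    (∀ lam : YoungDiagram, lam ≤ box k n → ∀ nu : YoungDiagram,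
      IsRimHook nu lam → skewSize nu lam = n - r →
      ∃ mu : YoungDiagram, IsRimHook nu mu ∧ skewSize nu mu = n ∧ lam ≤ mu ∧
        skewCells nu lam ⊆ skewCells nu mu ∧ n - k < mu.rowLen 0) := by
  constructor
  · intro nu hnu i hi
    obtain ⟨mu, hmem, hrh, hsz, hcell, hrow⟩ := rim_construction hkn nu hnu i hi
    exact ⟨mu, hrh, hsz, ⟨(i, nu.rowLen i), hcell, le_rfl⟩, hrow⟩
  · intro lam hlam nu hrh hsz
    obtain ⟨hle, _, _, hnosq⟩ := hrh
    have hne : (skewCells nu lam).Nonempty := by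
      rw [← Finset.card_pos]
      have hcard : (skewCells nu lam).card = n - r := hsz
      omega
    obtain ⟨c0, hc0, hmax⟩ := Finset.exists_max_image (skewCells nu lam) Prod.fst hne
    have hnub : nu ≤ box k n := le_trans hle hlam
    have htk : c0.1 < k := by
      have h1 : c0 ∈ lam.cells := (Finset.mem_sdiff.mp hc0).1
      have := (mem_box_iff c0).mp (hlam h1)
      omega
    obtain ⟨mu, hmem, hrh2, hsz2, hcell2, hrow⟩ := rim_construction hkn nu hnub c0.1 htk
    have hlammu : lam ≤ mu := by
      intro c hc
      obtain ⟨a, b⟩ := c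
      have hak : a < k := ((mem_box_iff (a, b)).mp (hlam hc)).1
      rw [YoungDiagram.mem_iff_lt_rowLen] at hc
      refine (hmem a b).mpr ⟨hak, ?_⟩
      rcases Nat.eq_zero_or_pos a with rfl | ha
      · have h1 : lam.rowLen 0 ≤ n - k := rowLen_le_of_le_box hlam 0
        unfold murow
        rw [if_pos rfl]
        omega
      rcases le_or_gt a c0.1 with hat | hat
      · have hb := row_bound_of_noSquare hle hnosq (a - 1)
        have he : a - 1 + 1 = a := by omega
        rw [he] at hb
        unfold murow
        rw [if_neg (by omega), if_pos hat]
        omega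
      · unfold murow
        rw [if_neg (by omega), if_neg (by omega)]
        by_contra hcon
        push_neg at hcon
        have hmemskew : (a, b) ∈ skewCells nu lam := by
          rw [skewCells, Finset.mem_sdiff, YoungDiagram.mem_cells, YoungDiagram.mem_cells,
            YoungDiagram.mem_iff_lt_rowLen, YoungDiagram.mem_iff_lt_rowLen]
          exact ⟨hc, by omega⟩
        have := hmax _ hmemskew
        simp only at this
        omega
    refine ⟨mu, hrh2, hsz2, hlammu, ?_, hrow⟩
    intro c hc
    rw [skewCells, Finset.mem_sdiff] at hc ⊢
    exact ⟨hlammu hc.1, hc.2⟩
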